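/- Let s, σ, l > 0 with sl > 4, 1+σ-sl/2 > 0, let 0 ≤ a ≤ 1 with sl/2 > 1 + a, and α_i = s/(i+σ). Then B_k(a) := ∑_{i=1}^k α_i^{2+a} ∏_{j=i+1}^k (1 - α_j l/2) = O(k^{-1-a}) as k → ∞. -/

import Mathlib

open Finset Filter Asymptotics Real

lemma step_ineq (s a c δ C : ℝ) (hs : 0 < s) (hc1 : 1 + a < c) (ha0 : 0 ≤ a)
    (hδ : δ = min (c - 1 - a) 1) (hC : s ^ (2 + a) ≤ C * δ) (hC0 : 0 ≤ C)
    (x : ℝ) (hx2 : 2 ≤ x) (hxc : c ≤ x) :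
    (1 - c / x) * (C * (x - 1) ^ (-(1 + a))) + (s / x) ^ (2 + a)
      ≤ C * x ^ (-(1 + a)) := by
  have hx0 : (0:ℝ) < x := by linarith
  have hδpos : 0 < δ := by
    rw [hδ]; exact lt_min (by linarith) one_pos
  have hδ1 : δ ≤ 1 := by rw [hδ]; exact min_le_right _ _
  have ht1 : (1:ℝ)/x ≤ 1/2 := by
    rw [div_le_div_iff₀ hx0 two_pos]; linarith
  have htpos : 0 < 1/x := by positivity
  have hbase : (0:ℝ) < 1 - 1/x := by linarith
  have hc0 : (1:ℝ) ≤ c := by linarith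
  have h1 : 1 - c / x ≤ (1 - 1/x) ^ c := by
    have := one_add_mul_self_le_rpow_one_add (s := -(1/x)) (by linarith) hc0
    rw [show (1:ℝ) + -(1/x) = 1 - 1/x by ring] at this
    calc 1 - c/x = 1 + c * (-(1/x)) := by ring
    _ ≤ _ := this
  have hx1 : x - 1 = x * (1 - 1/x) := by field_simp
  have h2 : (x - 1) ^ (-(1+a)) = x ^ (-(1+a)) * (1 - 1/x) ^ (-(1+a)) := by
    rw [hx1, Real.mul_rpow hx0.le hbase.le]
  have h3 : (1 - 1/x) ^ c * (1 - 1/x) ^ (-(1+a)) = (1 - 1/x) ^ (c - 1 - a) := by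
    rw [← Real.rpow_add hbase]; ring_nf
  have h4 : (1 - 1/x) ^ (c - 1 - a) ≤ 1 - δ / x := by
    have h41 : (1 - 1/x) ^ (c - 1 - a) ≤ (1 - 1/x) ^ δ :=
      Real.rpow_le_rpow_of_exponent_ge hbase (by linarith) (by rw [hδ]; exact min_le_left _ _)
    have h42 : (1 - 1/x) ^ δ ≤ 1 - δ/x := by
      have := rpow_one_add_le_one_add_mul_self (s := -(1/x)) (by linarith) hδpos.le hδ1
      rw [show (1:ℝ) + -(1/x) = 1 - 1/x by ring] at this
      calc (1 - 1/x) ^ δ ≤ 1 + δ * (-(1/x)) := this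
      _ = 1 - δ/x := by ring
    linarith
  have hxp : (0:ℝ) < x ^ (-(1+a)) := Real.rpow_pos_of_pos hx0 _
  have key : (1 - c / x) * (x - 1) ^ (-(1 + a)) ≤ x ^ (-(1+a)) * (1 - δ/x) := by
    calc (1 - c / x) * (x - 1) ^ (-(1 + a))
        ≤ (1 - 1/x) ^ c * (x - 1) ^ (-(1+a)) := by
          apply mul_le_mul_of_nonneg_right h1 (Real.rpow_nonneg (by linarith) _)
    _ = x ^ (-(1+a)) * ((1 - 1/x) ^ c * (1 - 1/x) ^ (-(1+a))) := by rw [h2]; ring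
    _ = x ^ (-(1+a)) * (1 - 1/x) ^ (c - 1 - a) := by rw [h3]
    _ ≤ x ^ (-(1+a)) * (1 - δ/x) := by
          apply mul_le_mul_of_nonneg_left h4 hxp.le
  have hlast : (s / x) ^ (2 + a) ≤ C * δ * x ^ (-(1+a)) / x := by
    have hsx : (s / x) ^ (2 + a) = s ^ (2+a) * x ^ (-(2+a)) := by
      rw [Real.div_rpow hs.le hx0.le, Real.rpow_neg hx0.le, div_eq_mul_inv]
    have hxx : x ^ (-(1+a)) / x = x ^ (-(2+a)) := by
      rw [← Real.rpow_sub_one hx0.ne']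
      ring_nf
    rw [hsx, mul_div_assoc, hxx]
    exact mul_le_mul_of_nonneg_right hC (Real.rpow_nonneg hx0.le _)
  have hCd : C * (x ^ (-(1+a)) * (1 - δ/x)) = C * x ^ (-(1+a)) - C * δ * x ^ (-(1+a)) / x := by
    field_simp
  calc (1 - c / x) * (C * (x - 1) ^ (-(1 + a))) + (s / x) ^ (2 + a)
      ≤ C * (x ^ (-(1+a)) * (1 - δ/x)) + C * δ * x ^ (-(1+a)) / x := by
        have := mul_le_mul_of_nonneg_left key hC0
        nlinarith [this, hlast]
  _ = C * x ^ (-(1+a)) := by rw [hCd]; ring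

theorem weighted_sum_asymptotics
    (s σ l a : ℝ) (hs : 0 < s) (hσ : 0 < σ) (hl : 0 < l)
    (hsl : 4 < s * l) (hσ' : 0 < 1 + σ - s * l / 2)
    (ha0 : 0 ≤ a) (ha1 : a ≤ 1) (hsla : 1 + a < s * l / 2) :
    (fun k : ℕ => ∑ i ∈ Finset.Icc 1 k,
        (s / ((i : ℝ) + σ)) ^ (2 + a)
          * ∏ j ∈ Finset.Icc (i + 1) k, (1 - (s / ((j : ℝ) + σ)) * l / 2))
      =O[atTop] fun k : ℕ => (k : ℝ) ^ (-1 - a) := by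
  set c : ℝ := s * l / 2 with hc
  set δ : ℝ := min (c - 1 - a) 1 with hδ
  have hδpos : 0 < δ := lt_min (by simp only [hc]; linarith) one_pos
  set B : ℕ → ℝ := fun k => ∑ i ∈ Finset.Icc 1 k,
      (s / ((i : ℝ) + σ)) ^ (2 + a)
        * ∏ j ∈ Finset.Icc (i + 1) k, (1 - (s / ((j : ℝ) + σ)) * l / 2) with hB
  have hrec : ∀ k : ℕ, B (k+1)
      = (1 - s / ((k:ℝ) + 1 + σ) * l / 2) * B k + (s / ((k:ℝ) + 1 + σ)) ^ (2+a) := by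
    intro k
    simp only [hB]
    rw [Finset.sum_Icc_succ_top (Nat.le_add_left 1 k)]
    rw [show Finset.Icc (k+1+1) (k+1) = ∅ from Finset.Icc_eq_empty (by omega)]
    rw [Finset.prod_empty, mul_one]
    have hcongr : ∀ i ∈ Finset.Icc 1 k,
        (s / ((i:ℝ) + σ)) ^ (2+a) * ∏ j ∈ Finset.Icc (i+1) (k+1), (1 - s / ((j:ℝ) + σ) * l / 2)
        = ((s / ((i:ℝ) + σ)) ^ (2+a) * ∏ j ∈ Finset.Icc (i+1) k, (1 - s / ((j:ℝ) + σ) * l / 2))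
            * (1 - s / ((k:ℝ) + 1 + σ) * l / 2) := by
      intro i hi
      simp only [Finset.mem_Icc] at hi
      rw [Finset.prod_Icc_succ_top (by omega)]
      push_cast
      ring
    rw [Finset.sum_congr rfl hcongr, ← Finset.sum_mul]
    push_cast
    ring
  set k0 : ℕ := ⌈c⌉₊ + 2 with hk0
  have hk0c : c ≤ (k0:ℝ) := by
    push_cast [hk0]
    have := Nat.le_ceil c
    linarith
  have hk02 : (2:ℝ) ≤ (k0:ℝ) := by
    push_cast [hk0]
    have : (0:ℝ) ≤ (⌈c⌉₊:ℝ) := Nat.cast_nonneg _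
    linarith
  set C : ℝ := max (s ^ (2+a) / δ) (|B k0| * ((k0:ℝ) + σ) ^ (1+a)) with hCdef
  have hC0 : 0 ≤ C := le_trans (by positivity) (le_max_left _ _)
  have hCδ : s ^ (2+a) ≤ C * δ := by
    rw [← div_le_iff₀ hδpos]
    exact le_max_left _ _
  have claim : ∀ k, k0 ≤ k → |B k| ≤ C * ((k:ℝ) + σ) ^ (-(1+a)) := by
    intro k hk
    induction k, hk using Nat.le_induction with
    | base =>
      have hp : (0:ℝ) < ((k0:ℝ) + σ) ^ (1+a) := Real.rpow_pos_of_pos (by linarith) _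
      have h1 : |B k0| * ((k0:ℝ) + σ) ^ (1+a) ≤ C := le_max_right _ _
      have h2 : ((k0:ℝ) + σ) ^ (1+a) * ((k0:ℝ) + σ) ^ (-(1+a)) = 1 := by
        rw [← Real.rpow_add (by linarith), add_neg_cancel, Real.rpow_zero]
      calc |B k0| = |B k0| * (((k0:ℝ) + σ) ^ (1+a) * ((k0:ℝ) + σ) ^ (-(1+a))) := by
            rw [h2, mul_one]
      _ = (|B k0| * ((k0:ℝ) + σ) ^ (1+a)) * ((k0:ℝ) + σ) ^ (-(1+a)) := by ring
      _ ≤ C * ((k0:ℝ) + σ) ^ (-(1+a)) := by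
            exact mul_le_mul_of_nonneg_right h1 (Real.rpow_nonneg (by linarith) _)
    | succ k hk ih =>
      set x : ℝ := (k:ℝ) + 1 + σ with hx
      have hx2 : (2:ℝ) ≤ x := by
        have : (k0:ℝ) ≤ (k:ℝ) := by exact_mod_cast hk
        simp only [hx]; linarith
      have hxc : c ≤ x := by
        have : (k0:ℝ) ≤ (k:ℝ) := by exact_mod_cast hk
        simp only [hx]; linarith
      have hx0 : (0:ℝ) < x := by linarith
      have hcx : s / x * l / 2 = c / x := by
        simp only [hc]; ring
      have hfac : 0 ≤ 1 - s / x * l / 2 := by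
        rw [hcx, sub_nonneg, div_le_one hx0]
        exact hxc
      have habs : |B (k+1)| ≤ (1 - c / x) * (C * (x - 1) ^ (-(1+a))) + (s / x) ^ (2+a) := by
        rw [hrec k]
        refine (abs_add_le _ _).trans ?_
        rw [abs_mul, abs_of_nonneg hfac, abs_of_nonneg (Real.rpow_nonneg (by positivity) _)]
        rw [hcx]
        have hx1 : x - 1 = (k:ℝ) + σ := by simp only [hx]; ring
        rw [hx1]
        have h1c : 0 ≤ 1 - c / x := by rwa [hcx] at hfac
        exact add_le_add_left (mul_le_mul_of_nonneg_left ih h1c) _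
      have := step_ineq s a c δ C hs (by simp only [hc]; linarith) ha0 hδ hCδ hC0 x hx2 hxc
      have hxe : ((k+1:ℕ):ℝ) + σ = x := by push_cast; simp only [hx]
      rw [hxe]
      linarith
  rw [isBigO_iff]
  refine ⟨C, ?_⟩
  filter_upwards [eventually_ge_atTop (max k0 1)] with k hk
  have hk0' : k0 ≤ k := le_trans (le_max_left _ _) hk
  have hk1 : 1 ≤ k := le_trans (le_max_right _ _) hk
  have hk1' : (1:ℝ) ≤ (k:ℝ) := by exact_mod_cast hk1
  have h1 : |B k| ≤ C * ((k:ℝ) + σ) ^ (-(1+a)) := claim k hk0'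
  have h2 : ((k:ℝ) + σ) ^ (-(1+a)) ≤ (k:ℝ) ^ (-(1+a)) := by
    rw [Real.rpow_neg (by linarith), Real.rpow_neg (by linarith)]
    apply inv_anti₀ (Real.rpow_pos_of_pos (by linarith) _)
    exact Real.rpow_le_rpow (by linarith) (by linarith) (by linarith)
  rw [Real.norm_eq_abs, Real.norm_eq_abs, show (-1 - a : ℝ) = -(1+a) by ring,
    abs_of_nonneg (Real.rpow_nonneg (show (0:ℝ) ≤ (k:ℝ) by linarith) (-(1+a)))]
  calc |B k| ≤ C * ((k:ℝ) + σ) ^ (-(1+a)) := h1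
  _ ≤ C * (k:ℝ) ^ (-(1+a)) := mul_le_mul_of_nonneg_left h2 hC0
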